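/- Let γ be a circuit in a graph Γ_k with monomials f^μ assigned to vertices, and suppose a chord c = (μ_r, μ_s) of γ splits γ into two circuits γ_1 = (μ_r,...,μ_s,μ_r) and γ_2 = (μ_1,...,μ_r,μ_s,...,μ_ℓ,μ_1). Then the syzygy σ_γ satisfies σ_γ = (f^γ/f^{γ_1})·σ_{γ_1} + (f^γ/f^{γ_2})·σ_{γ_2}; in particular σ_γ lies in the S-module generated by σ_{γ_1} and σ_{γ_2}. -/
import Mathlib

open MvPolynomial Finset

namespace Stmt5Aux

variable {K : Type*} [Field K]

noncomputable def eps (d m : ℕ) (u w : Fin m) (c : MvPolynomial (Fin d) K) :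
    Fin m × Fin m → MvPolynomial (Fin d) K :=
  if u ≤ w then Pi.single (u, w) c else - Pi.single (w, u) c

noncomputable def fw (d m : ℕ) (a : Fin m → (Fin d →₀ ℕ)) (L : ℕ) (w : ℕ → Fin m) : Fin d →₀ ℕ :=
  (Finset.range L).sup fun i => a (w i)

noncomputable def sig (d m : ℕ) (a : Fin m → (Fin d →₀ ℕ)) (L : ℕ) (w : ℕ → Fin m) :
    Fin m × Fin m → MvPolynomial (Fin d) K :=
  ∑ i ∈ Finset.range L, eps d m (w i) (w ((i + 1) % L))
    (monomial (fw d m a L w - (a (w i) ⊔ a (w ((i + 1) % L)))) (1 : K))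

noncomputable def TT (d m : ℕ) (a : Fin m → (Fin d →₀ ℕ)) (v : ℕ → Fin m)
    (F : Fin d →₀ ℕ) (i j : ℕ) : Fin m × Fin m → MvPolynomial (Fin d) K :=
  eps d m (v i) (v j) (monomial (F - (a (v i) ⊔ a (v j))) (1 : K))

lemma single_smul {d m : ℕ} (x : Fin m × Fin m) (q c : MvPolynomial (Fin d) K) :
    q • (Pi.single x c : Fin m × Fin m → MvPolynomial (Fin d) K) = Pi.single x (q * c) := by
  funext j
  simp [Pi.single_apply]

lemma eps_smul {d m : ℕ} (b c : Fin d →₀ ℕ) (u w : Fin m) :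
    (monomial b (1 : K)) • eps d m u w (monomial c (1 : K))
      = eps d m u w (monomial (b + c) (1 : K)) := by
  unfold eps
  split
  · rw [single_smul, monomial_mul, one_mul]
  · rw [smul_neg, single_smul, monomial_mul, one_mul]

lemma eps_add_eps {d m : ℕ} (u w : Fin m) (h : u ≠ w) (c : MvPolynomial (Fin d) K) :
    eps d m u w c + eps d m w u c = 0 := by
  unfold eps
  rcases le_total u w with hle | hle
  · rw [if_pos hle, if_neg (fun h' => h (le_antisymm hle h'))]
    exact add_neg_cancel _
  · rw [if_neg (fun h' => h (le_antisymm h' hle)), if_pos hle]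
    exact neg_add_cancel _

lemma sum_range_split {M : Type*} [AddCommMonoid M] (f : ℕ → M) (n : ℕ) (hn : 0 < n) :
    ∑ i ∈ Finset.range n, f i = (∑ i ∈ Finset.range (n - 1), f i) + f (n - 1) := by
  conv_lhs => rw [show n = (n - 1) + 1 by omega]
  rw [Finset.sum_range_succ]

lemma circ_sum {M : Type*} [AddCommMonoid M] (g : ℕ → ℕ → M) (n : ℕ) (hn : 0 < n) :
    ∑ i ∈ Finset.range n, g i ((i + 1) % n)
      = (∑ i ∈ Finset.range (n - 1), g i (i + 1)) + g (n - 1) 0 := by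
  rw [sum_range_split _ n hn]
  congr 1
  · exact Finset.sum_congr rfl fun i hi => by
      rw [Nat.mod_eq_of_lt (by have := Finset.mem_range.1 hi; omega)]
  · rw [show n - 1 + 1 = n by omega, Nat.mod_self]

lemma smul_sig {d m : ℕ} (a : Fin m → (Fin d →₀ ℕ)) (L : ℕ) (hL : 0 < L)
    (w : ℕ → Fin m) (F : Fin d →₀ ℕ) (hF : fw d m a L w ≤ F) :
    (monomial (F - fw d m a L w) (1 : K)) • sig d m a L w
      = ∑ i ∈ Finset.range L, eps d m (w i) (w ((i + 1) % L))
          (monomial (F - (a (w i) ⊔ a (w ((i + 1) % L)))) (1 : K)) := by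
  unfold sig
  rw [Finset.smul_sum]
  refine Finset.sum_congr rfl fun i hi => ?_
  rw [eps_smul, tsub_add_tsub_cancel hF ?_]
  refine sup_le ?_ ?_
  · exact Finset.le_sup (f := fun j => a (w j)) hi
  · exact Finset.le_sup (f := fun j => a (w j)) (Finset.mem_range.2 (Nat.mod_lt _ hL))

lemma sig_split {d m : ℕ} (a : Fin m → (Fin d →₀ ℕ)) (L : ℕ) (w : ℕ → Fin m) (hL : 0 < L) :
    sig (K := K) d m a L w
      = (∑ i ∈ Finset.range (L - 1), eps d m (w i) (w (i + 1))
          (monomial (fw d m a L w - (a (w i) ⊔ a (w (i + 1)))) (1 : K)))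
        + eps d m (w (L - 1)) (w 0)
            (monomial (fw d m a L w - (a (w (L - 1)) ⊔ a (w 0))) (1 : K)) :=
  circ_sum (fun i j => eps d m (w i) (w j)
    (monomial (fw d m a L w - (a (w i) ⊔ a (w j))) (1 : K))) L hL

lemma smul_sig' {d m : ℕ} (a : Fin m → (Fin d →₀ ℕ)) (L : ℕ) (hL : 0 < L)
    (w : ℕ → Fin m) (F : Fin d →₀ ℕ) (hF : fw d m a L w ≤ F) :
    (monomial (F - fw d m a L w) (1 : K)) • sig d m a L w
      = (∑ i ∈ Finset.range (L - 1), eps d m (w i) (w (i + 1))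
          (monomial (F - (a (w i) ⊔ a (w (i + 1)))) (1 : K)))
        + eps d m (w (L - 1)) (w 0)
            (monomial (F - (a (w (L - 1)) ⊔ a (w 0))) (1 : K)) := by
  rw [smul_sig a L hL w F hF]
  exact circ_sum (fun i j => eps d m (w i) (w j)
    (monomial (F - (a (w i) ⊔ a (w j))) (1 : K))) L hL

theorem chord_eq (d m ℓ r s : ℕ)
    (hl : 4 ≤ ℓ) (hrs : r + 2 ≤ s) (hsl : s < ℓ) (hchord : s + 2 ≤ ℓ + r)
    (v : ℕ → Fin m) (hv : ∀ i < ℓ, ∀ j < ℓ, v i = v j → i = j)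
    (a : Fin m → (Fin d →₀ ℕ)) :
    sig (K := K) d m a ℓ v
      = (monomial (fw d m a ℓ v - fw d m a (s - r + 1) (fun i => v (r + i))) (1 : K))
          • sig d m a (s - r + 1) (fun i => v (r + i))
      + (monomial (fw d m a ℓ v - fw d m a (r + 1 + (ℓ - s))
            (fun i => if i ≤ r then v i else v (i + (s - r - 1)))) (1 : K))
          • sig d m a (r + 1 + (ℓ - s))
            (fun i => if i ≤ r then v i else v (i + (s - r - 1))) := by
  have hF1 : fw d m a (s - r + 1) (fun i => v (r + i)) ≤ fw d m a ℓ v := by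
    unfold fw
    refine Finset.sup_le fun i hi => ?_
    exact Finset.le_sup (f := fun j => a (v j))
      (Finset.mem_range.2 (by have := Finset.mem_range.1 hi; omega))
  have hF2 : fw d m a (r + 1 + (ℓ - s))
      (fun i => if i ≤ r then v i else v (i + (s - r - 1))) ≤ fw d m a ℓ v := by
    unfold fw
    refine Finset.sup_le fun i hi => ?_
    have hi' := Finset.mem_range.1 hi
    by_cases h : i ≤ r
    · simpa [h] using Finset.le_sup (f := fun j => a (v j))
        (Finset.mem_range.2 (show i < ℓ by omega))
    · simpa [h] using Finset.le_sup (f := fun j => a (v j))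
        (Finset.mem_range.2 (show i + (s - r - 1) < ℓ by omega))
  rw [sig_split a ℓ v (by omega),
    smul_sig' a (s - r + 1) (by omega) (fun i => v (r + i)) (fw d m a ℓ v) hF1,
    smul_sig' a (r + 1 + (ℓ - s)) (by omega)
      (fun i => if i ≤ r then v i else v (i + (s - r - 1))) (fw d m a ℓ v) hF2]
  rw [if_neg (show ¬(r + 1 + (ℓ - s) - 1 ≤ r) from by omega),
      if_pos (Nat.zero_le r),
      show r + 1 + (ℓ - s) - 1 + (s - r - 1) = ℓ - 1 from by omega,
      show s - r + 1 - 1 = s - r from by omega,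
      show r + (s - r) = s from by omega, Nat.add_zero,
      show r + 1 + (ℓ - s) - 1 = r + 1 + (ℓ - s - 1) from by omega,
      Finset.sum_range_add, Finset.sum_range_succ,
      if_pos (le_refl r), if_neg (show ¬(r + 1 ≤ r) from by omega),
      show r + 1 + (s - r - 1) = s from by omega]
  have h2a : (∑ x ∈ Finset.range r,
      Stmt5Aux.eps d m (if x ≤ r then v x else v (x + (s - r - 1)))
        (if x + 1 ≤ r then v (x + 1) else v (x + 1 + (s - r - 1)))
        ((MvPolynomial.monomial
            (Stmt5Aux.fw d m a ℓ v -
              (a (if x ≤ r then v x else v (x + (s - r - 1))) ⊔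
                a (if x + 1 ≤ r then v (x + 1) else v (x + 1 + (s - r - 1))))))
          (1 : K)))
      = ∑ x ∈ Finset.range r, TT (K := K) d m a v (fw d m a ℓ v) x (x + 1) := by
    refine Finset.sum_congr rfl fun x hx => ?_
    have hx' := Finset.mem_range.1 hx
    rw [if_pos (show x ≤ r by omega), if_pos (show x + 1 ≤ r by omega)]
    rfl
  have h2b : (∑ x ∈ Finset.range (ℓ - s - 1),
      Stmt5Aux.eps d m (if r + 1 + x ≤ r then v (r + 1 + x) else v (r + 1 + x + (s - r - 1)))
        (if r + 1 + x + 1 ≤ r then v (r + 1 + x + 1) else v (r + 1 + x + 1 + (s - r - 1)))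
        ((MvPolynomial.monomial
            (Stmt5Aux.fw d m a ℓ v -
              (a (if r + 1 + x ≤ r then v (r + 1 + x) else v (r + 1 + x + (s - r - 1))) ⊔
                a (if r + 1 + x + 1 ≤ r then v (r + 1 + x + 1) else v (r + 1 + x + 1 + (s - r - 1))))))
          (1 : K)))
      = ∑ x ∈ Finset.range (ℓ - s - 1), TT (K := K) d m a v (fw d m a ℓ v) (s + x) (s + x + 1) := by
    refine Finset.sum_congr rfl fun x hx => ?_
    rw [if_neg (show ¬(r + 1 + x ≤ r) by omega), if_neg (show ¬(r + 1 + x + 1 ≤ r) by omega),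
        show r + 1 + x + (s - r - 1) = s + x from by omega,
        show r + 1 + x + 1 + (s - r - 1) = s + x + 1 from by omega]
    rfl
  rw [h2a, h2b]
  show (∑ i ∈ Finset.range (ℓ - 1), TT (K := K) d m a v (fw d m a ℓ v) i (i + 1))
        + TT (K := K) d m a v (fw d m a ℓ v) (ℓ - 1) 0
      = (∑ i ∈ Finset.range (s - r), TT (K := K) d m a v (fw d m a ℓ v) (r + i) (r + i + 1))
          + TT (K := K) d m a v (fw d m a ℓ v) s r
        + ((∑ x ∈ Finset.range r, TT (K := K) d m a v (fw d m a ℓ v) x (x + 1))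
            + TT (K := K) d m a v (fw d m a ℓ v) r s
            + ∑ x ∈ Finset.range (ℓ - s - 1), TT (K := K) d m a v (fw d m a ℓ v) (s + x) (s + x + 1)
            + TT (K := K) d m a v (fw d m a ℓ v) (ℓ - 1) 0)
  have hA : (∑ i ∈ Finset.range (ℓ - 1), TT (K := K) d m a v (fw d m a ℓ v) i (i + 1))
      = (∑ i ∈ Finset.range r, TT (K := K) d m a v (fw d m a ℓ v) i (i + 1))
        + (∑ i ∈ Finset.range (s - r), TT (K := K) d m a v (fw d m a ℓ v) (r + i) (r + i + 1))
        + ∑ i ∈ Finset.range (ℓ - s - 1), TT (K := K) d m a v (fw d m a ℓ v) (s + i) (s + i + 1) := by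
    rw [show ℓ - 1 = r + (s - r) + (ℓ - s - 1) from by omega,
        Finset.sum_range_add, Finset.sum_range_add]
    congr 1
    refine Finset.sum_congr rfl fun i _ => ?_
    rw [show r + (s - r) + i = s + i from by omega]
  have hne : v s ≠ v r := fun h => by have := hv s hsl r (by omega) h; omega
  have hDE : TT (K := K) d m a v (fw d m a ℓ v) s r = - TT (K := K) d m a v (fw d m a ℓ v) r s := by
    refine eq_neg_of_add_eq_zero_left ?_
    unfold TT
    rw [sup_comm (a (v s)) (a (v r))]
    exact eps_add_eps _ _ hne _
  rw [hA, hDE]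
  abel

theorem chord_mem (d m ℓ r s : ℕ)
    (hl : 4 ≤ ℓ) (hrs : r + 2 ≤ s) (hsl : s < ℓ) (hchord : s + 2 ≤ ℓ + r)
    (v : ℕ → Fin m) (hv : ∀ i < ℓ, ∀ j < ℓ, v i = v j → i = j)
    (a : Fin m → (Fin d →₀ ℕ)) :
    sig (K := K) d m a ℓ v ∈ Submodule.span (MvPolynomial (Fin d) K)
      {sig (K := K) d m a (s - r + 1) (fun i => v (r + i)),
       sig (K := K) d m a (r + 1 + (ℓ - s))
         (fun i => if i ≤ r then v i else v (i + (s - r - 1)))} := by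
  rw [chord_eq d m ℓ r s hl hrs hsl hchord v hv a]
  exact Submodule.add_mem _
    (Submodule.smul_mem _ _ (Submodule.subset_span (Set.mem_insert _ _)))
    (Submodule.smul_mem _ _ (Submodule.subset_span (Set.mem_insert_iff.2 (Or.inr rfl))))

end Stmt5Aux

theorem stmt5 {K : Type*} [Field K] (d m ℓ r s : ℕ)
    (hl : 4 ≤ ℓ) (hrs : r + 2 ≤ s) (hsl : s < ℓ) (hchord : s + 2 ≤ ℓ + r)
    (v : ℕ → Fin m) (hv : ∀ i < ℓ, ∀ j < ℓ, v i = v j → i = j)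
    (a : Fin m → (Fin d →₀ ℕ)) :
    (letI S := MvPolynomial (Fin d) K
     letI eps : Fin m → Fin m → S → (Fin m × Fin m → S) := fun u w c =>
       if u ≤ w then Pi.single (u, w) c else - Pi.single (w, u) c
     letI fw : ℕ → (ℕ → Fin m) → (Fin d →₀ ℕ) := fun L w =>
       (Finset.range L).sup fun i => a (w i)
     letI σ : ℕ → (ℕ → Fin m) → (Fin m × Fin m → S) := fun L w =>
       ∑ i ∈ Finset.range L, eps (w i) (w ((i + 1) % L))
         (monomial (fw L w - (a (w i) ⊔ a (w ((i + 1) % L)))) (1 : K))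
     letI w₁ : ℕ → Fin m := fun i => v (r + i)
     letI ℓ₁ : ℕ := s - r + 1
     letI w₂ : ℕ → Fin m := fun i => if i ≤ r then v i else v (i + (s - r - 1))
     letI ℓ₂ : ℕ := r + 1 + (ℓ - s)
     σ ℓ v = (monomial (fw ℓ v - fw ℓ₁ w₁) (1 : K)) • σ ℓ₁ w₁
           + (monomial (fw ℓ v - fw ℓ₂ w₂) (1 : K)) • σ ℓ₂ w₂
       ∧ σ ℓ v ∈ Submodule.span S {σ ℓ₁ w₁, σ ℓ₂ w₂}) :=
  ⟨Stmt5Aux.chord_eq d m ℓ r s hl hrs hsl hchord v hv a,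
   Stmt5Aux.chord_mem d m ℓ r s hl hrs hsl hchord v hv a⟩
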